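/- Let A be a finite set of atoms and F an S5 standpoint structure over A and S. Define Unknown(F) := { ¬□_s φ : s ∈ S, φ a formula, and F ⊮ □_s φ }. Then for every S4F standpoint structure F' over A and S: F' ⊴ F if and only if F' ⊩ χ for every χ ∈ Unknown(F). -/

import Mathlib

/-- Formulas of S4F standpoint logic over atoms `A` and standpoint names `S`. -/
inductive SForm (A S : Type) : Type
  | atom : A → SForm A S
  | neg  : SForm A S → SForm A S
  | and  : SForm A S → SForm A S → SForm A S
  | box  : S → SForm A S → SForm A S

/-- Expressions: formulas or sharpening statements `s ≼ u`. -/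
inductive SExpr (A S : Type) : Type
  | form  : SForm A S → SExpr A S
  | sharp : S → S → SExpr A S

/-- S4F standpoint structures over a carrier type `P` of precisifications. -/
structure SFFS (A S P : Type) (star : S) where
  Pi : Set P
  sig : S → Set P
  tau : S → Set P
  val : P → Set A
  nonempty_Pi : Pi.Nonempty
  sig_sub : ∀ s, sig s ⊆ Pi
  tau_sub : ∀ s, tau s ⊆ Pi
  star_union : sig star ∪ tau star = Pi
  sig_nonempty : ∀ s, (sig s).Nonempty
  sig_tau_disj : ∀ s u, sig s ∩ tau u = ∅

/-- Pointed satisfaction `F, π ⊩ φ` for formulas. -/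
def SFFS.sat {A S P : Type} {star : S} (F : SFFS A S P star) : SForm A S → P → Prop
  | SForm.atom p, π => p ∈ F.val π
  | SForm.neg φ, π => ¬ F.sat φ π
  | SForm.and φ ψ, π => F.sat φ π ∧ F.sat ψ π
  | SForm.box s φ, π =>
      (π ∈ F.sig star → ∀ π' ∈ F.sig s, F.sat φ π') ∧
      (π ∈ F.tau star → ∀ π' ∈ F.sig s ∪ F.tau s, F.sat φ π')

/-- Pointed satisfaction for expressions. -/
def SFFS.satE {A S P : Type} {star : S} (F : SFFS A S P star) (e : SExpr A S) (π : P) : Prop :=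
  match e with
  | SExpr.form φ => F.sat φ π
  | SExpr.sharp s u => F.sig s ⊆ F.sig u ∧ F.tau s ⊆ F.tau u

/-- Global satisfaction `F ⊩ φ` of a formula. -/
def SFFS.models {A S P : Type} {star : S} (F : SFFS A S P star) (φ : SForm A S) : Prop :=
  ∀ π ∈ F.Pi, F.sat φ π

/-- Global satisfaction of an expression. -/
def SFFS.modelsE {A S P : Type} {star : S} (F : SFFS A S P star) (e : SExpr A S) : Prop :=
  ∀ π ∈ F.Pi, F.satE e π

/-- `F` is a model of a theory (set of expressions) `T`. -/
def SFFS.isModel {A S P : Type} {star : S} (F : SFFS A S P star) (T : Set (SExpr A S)) : Prop :=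
  ∀ e ∈ T, F.modelsE e

/-- `F` is a model of a set of formulas `T`. -/
def SFFS.isModelF {A S P : Type} {star : S} (F : SFFS A S P star) (T : Set (SForm A S)) : Prop :=
  ∀ φ ∈ T, F.models φ

/-- S5 standpoint structures: all outer sets empty. -/
def SFFS.IsS5 {A S P : Type} {star : S} (F : SFFS A S P star) : Prop :=
  ∀ s, F.tau s = ∅

/-- Determination preorder `F1 ⊴_s F2`, per standpoint. -/
def prefS {A S P1 P2 : Type} {star : S} (F1 : SFFS A S P1 star) (F2 : SFFS A S P2 star)
    (s : S) : Prop :=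
  F2.val '' F2.sig s = F1.val '' F1.sig s ∧
  F2.val '' F2.tau s ⊆ F1.val '' (F1.sig s ∪ F1.tau s)

/-- Determination preorder `F1 ⊴ F2`. -/
def pref {A S P1 P2 : Type} {star : S} (F1 : SFFS A S P1 star) (F2 : SFFS A S P2 star) : Prop :=
  ∀ s, prefS F1 F2 s

/-- Entailment `T ⊨ e`: every model of `T` satisfies `e`. -/
def Entails {A S : Type} (star : S) (T : Set (SExpr A S)) (e : SExpr A S) : Prop :=
  ∀ (P : Type) (F : SFFS A S P star), F.isModel T → F.modelsE e

/-- Derivable sharpening `T ⊢ s ≼ u`. -/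
inductive Sharpens {A S : Type} (star : S) (T : Set (SExpr A S)) : S → S → Prop
  | of_mem {s u : S} : SExpr.sharp s u ∈ T → Sharpens star T s u
  | to_star (s : S) : Sharpens star T s star
  | refl (s : S) : Sharpens star T s s
  | trans {s t u : S} : SExpr.sharp s t ∈ T → Sharpens star T t u → Sharpens star T s u

/-- An S5 standpoint structure `F` is a minimal model of a theory `T`. -/
def isMinimalModel {A S P : Type} {star : S} (F : SFFS A S P star) (T : Set (SExpr A S)) : Prop :=
  F.IsS5 ∧ F.isModel T ∧
  ∀ (P' : Type) (F' : SFFS A S P' star), pref F' F → F'.isModel T → (pref F' F ∧ pref F F')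


open Classical in
/-- Literal for atom `p` relative to valuation `v`. -/
noncomputable def litF {A S : Type} (v : Set A) (p : A) : SForm A S :=
  if p ∈ v then SForm.atom p else SForm.neg (SForm.atom p)

/-- Characteristic formula of a valuation `v` (with a default atom `a0`). -/
noncomputable def chiF {A S : Type} [Fintype A] (v : Set A) (a0 : A) : SForm A S :=
  ((Finset.univ : Finset A).toList.map (litF v)).foldr SForm.and (litF v a0)

lemma sat_litF {A S P : Type} {star : S} (F : SFFS A S P star) (v : Set A) (p : A) (π : P) :
    F.sat (litF v p) π ↔ (p ∈ F.val π ↔ p ∈ v) := by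
  unfold litF
  by_cases h : p ∈ v <;> simp [h, SFFS.sat]

lemma sat_foldr {A S P : Type} {star : S} (F : SFFS A S P star)
    (l : List (SForm A S)) (b : SForm A S) (π : P) :
    F.sat (l.foldr SForm.and b) π ↔ (∀ ψ ∈ l, F.sat ψ π) ∧ F.sat b π := by
  induction l with
  | nil => simp
  | cons h t ih =>
    simp only [List.foldr_cons, SFFS.sat, ih, List.mem_cons]
    constructor
    · rintro ⟨h1, h2, h3⟩
      exact ⟨fun ψ hψ => hψ.elim (fun e => e ▸ h1) (h2 ψ), h3⟩
    · rintro ⟨h1, h2⟩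
      exact ⟨h1 h (Or.inl rfl), fun ψ hψ => h1 ψ (Or.inr hψ), h2⟩

lemma sat_chiF {A S P : Type} {star : S} [Fintype A] (F : SFFS A S P star)
    (v : Set A) (a0 : A) (π : P) :
    F.sat (chiF v a0) π ↔ F.val π = v := by
  unfold chiF
  rw [sat_foldr]
  constructor
  · rintro ⟨h1, -⟩
    ext p
    have hp : (litF v p : SForm A S) ∈ (Finset.univ : Finset A).toList.map (litF v) :=
      List.mem_map_of_mem (by simp [Finset.mem_toList])
    exact (sat_litF F v p π).mp (h1 _ hp)
  · intro hv
    constructor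
    · intro ψ hψ
      obtain ⟨p, -, rfl⟩ := List.mem_map.mp hψ
      exact (sat_litF F v p π).mpr (by rw [hv])
    · exact (sat_litF F v a0 π).mpr (by rw [hv])

/-- Every `sig u` is contained in `sig star`. -/
lemma sig_sub_star {A S P : Type} {star : S} (F : SFFS A S P star) (u : S) :
    F.sig u ⊆ F.sig star := by
  intro x hx
  have hx' : x ∈ F.Pi := F.sig_sub u hx
  rw [← F.star_union] at hx'
  rcases hx' with h | h
  · exact h
  · exact absurd (Set.mem_inter hx h)
      (by rw [F.sig_tau_disj u star]; exact Set.notMem_empty x)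

lemma not_mem_tau_star {A S P : Type} {star : S} (F : SFFS A S P star) {x : P}
    (hx : x ∈ F.sig star) : x ∉ F.tau star := fun h =>
  absurd (Set.mem_inter hx h)
    (by rw [F.sig_tau_disj star star]; exact Set.notMem_empty x)

lemma sig_star_eq_Pi {A S P : Type} {star : S} (F : SFFS A S P star) (hS5 : F.IsS5) :
    F.sig star = F.Pi := by
  have h := F.star_union
  rw [hS5 star, Set.union_empty] at h
  exact h

/-- Truth transfer: if the valuation images of all `sig` sets coincide, then satisfaction
at `sig star` points of `F'` matches satisfaction at points of the S5 structure `F`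
with the same valuation. -/
lemma transferF {A S P P' : Type} {star : S}
    (F : SFFS A S P star) (hS5 : F.IsS5) (F' : SFFS A S P' star)
    (H : ∀ u, F.val '' F.sig u = F'.val '' F'.sig u) :
    ∀ (φ : SForm A S) (π : P), π ∈ F.Pi → ∀ π' ∈ F'.sig star, F.val π = F'.val π' →
      (F.sat φ π ↔ F'.sat φ π') := by
  intro φ
  induction φ with
  | atom p => intro π hπ π' hπ' hval; simp [SFFS.sat, hval]
  | neg ψ ih => intro π hπ π' hπ' hval; simp [SFFS.sat, ih π hπ π' hπ' hval]
  | and ψ χ ih1 ih2 =>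
    intro π hπ π' hπ' hval
    simp [SFFS.sat, ih1 π hπ π' hπ' hval, ih2 π hπ π' hπ' hval]
  | box u ψ ih =>
    intro π hπ π' hπ' hval
    have hπstar : π ∈ F.sig star := (sig_star_eq_Pi F hS5) ▸ hπ
    have hπnotτ : π ∉ F.tau star := by rw [hS5 star]; exact Set.notMem_empty π
    have hπ'notτ : π' ∉ F'.tau star := not_mem_tau_star F' hπ'
    show (_ ∧ _) ↔ (_ ∧ _)
    constructor
    · rintro ⟨c1, -⟩
      refine ⟨fun _ π2' hπ2' => ?_, fun h => absurd h hπ'notτ⟩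
      have hmem : F'.val π2' ∈ F.val '' F.sig u := by rw [H u]; exact ⟨π2', hπ2', rfl⟩
      obtain ⟨π2, hπ2, hv2⟩ := hmem
      exact (ih π2 (F.sig_sub u hπ2) π2' (sig_sub_star F' u hπ2') hv2).mp (c1 hπstar π2 hπ2)
    · rintro ⟨c1, -⟩
      refine ⟨fun _ π2 hπ2 => ?_, fun h => absurd h hπnotτ⟩
      have hmem : F.val π2 ∈ F'.val '' F'.sig u := by rw [← H u]; exact ⟨π2, hπ2, rfl⟩
      obtain ⟨π2', hπ2', hv2⟩ := hmem
      exact (ih π2 (F.sig_sub u hπ2) π2' (sig_sub_star F' u hπ2') hv2.symm).mpr (c1 hπ' π2' hπ2')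

/-- For an S5 structure `F` (finite vocabulary), `F' ⊴ F` iff `F'` globally
satisfies every element of `Unknown(F) = { ¬□_s φ : F ⊮ □_s φ }`. -/
theorem pref_iff_models_unknown {A S P P' : Type} [Fintype A] (star : S)
    (F : SFFS A S P star) (hS5 : F.IsS5) (F' : SFFS A S P' star) :
    pref F' F ↔
      ∀ (s : S) (φ : SForm A S), ¬ F.models (SForm.box s φ) →
        F'.models (SForm.neg (SForm.box s φ)) := by
  have hPiF : F.sig star = F.Pi := sig_star_eq_Pi F hS5
  constructor
  · -- pref → models Unknown
    intro hpref s φ hnb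
    have H : ∀ u, F.val '' F.sig u = F'.val '' F'.sig u := fun u => (hpref u).1
    -- extract a counterexample point in F.sig s
    have hex : ∃ π ∈ F.sig s, ¬ F.sat φ π := by
      by_contra hall
      push_neg at hall
      apply hnb
      intro π₀ hπ₀
      exact ⟨fun _ => hall, fun ht => absurd ht (by rw [hS5 star]; exact Set.notMem_empty π₀)⟩
    obtain ⟨π, hπs, hπφ⟩ := hex
    have : F.val π ∈ F'.val '' F'.sig s := by rw [← H s]; exact ⟨π, hπs, rfl⟩
    obtain ⟨π', hπ's, hv⟩ := this
    have hπ'star : π' ∈ F'.sig star := sig_sub_star F' s hπ's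
    have hπ'φ : ¬ F'.sat φ π' :=
      fun h => hπφ ((transferF F hS5 F' H φ π (F.sig_sub s hπs) π' hπ'star hv.symm).mpr h)
    intro π₀ hπ₀
    rintro ⟨c1, c2⟩
    have hπ₀' : π₀ ∈ F'.sig star ∪ F'.tau star := F'.star_union ▸ hπ₀
    rcases hπ₀' with h | h
    · exact hπ'φ (c1 h π' hπ's)
    · exact hπ'φ (c2 h π' (Or.inl hπ's))
  · -- models Unknown → pref
    intro hRHS s
    refine ⟨?_, by rw [hS5 s]; simp⟩
    -- helper: from ¬F.models(□_s φ), get a counterexample in F'.sig s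
    have key : ∀ φ : SForm A S, ¬ F.models (SForm.box s φ) →
        ∃ π' ∈ F'.sig s, ¬ F'.sat φ π' := by
      intro φ hnb
      have h2 := hRHS s φ hnb
      obtain ⟨π₀', hπ₀'⟩ := F'.sig_nonempty star
      have h3 := h2 π₀' (F'.sig_sub star hπ₀')
      have hC1 : ¬ ∀ π' ∈ F'.sig s, F'.sat φ π' := by
        intro hall
        exact h3 ⟨fun _ => hall,
          fun ht => absurd ht (not_mem_tau_star F' hπ₀')⟩
      push_neg at hC1
      exact hC1
    by_cases hA : Nonempty A
    · obtain ⟨a0⟩ := hA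
      apply Set.Subset.antisymm
      · -- γ(σ(s)) ⊆ γ'(σ'(s))
        rintro v ⟨π, hπs, rfl⟩
        have hnb : ¬ F.models (SForm.box s (SForm.neg (chiF (F.val π) a0))) := by
          intro hm
          have hmemPi : π ∈ F.Pi := F.sig_sub s hπs
          have := (hm π hmemPi).1 (hPiF ▸ hmemPi) π hπs
          exact this ((sat_chiF F (F.val π) a0 π).mpr rfl)
        obtain ⟨π', hπ's, hπ'⟩ := key _ hnb
        have : F'.sat (chiF (F.val π) a0) π' := not_not.mp hπ'
        exact ⟨π', hπ's, (sat_chiF F' (F.val π) a0 π').mp this⟩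
      · -- γ'(σ'(s)) ⊆ γ(σ(s))
        rintro v ⟨π'₀, hπ'₀s, rfl⟩
        by_contra hv
        set v := F'.val π'₀ with hvdef
        have hnb : ¬ F.models (SForm.box s (SForm.neg (SForm.box s (SForm.neg (chiF v a0))))) := by
          intro hm
          obtain ⟨π₁, hπ₁⟩ := F.nonempty_Pi
          obtain ⟨π₂, hπ₂⟩ := F.sig_nonempty s
          have c1 := (hm π₁ hπ₁).1 (hPiF ▸ hπ₁) π₂ hπ₂
          apply c1
          refine ⟨fun _ π₃ hπ₃ hc => ?_,
            fun ht => absurd ht (by rw [hS5 star]; exact Set.notMem_empty π₂)⟩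
          exact hv ⟨π₃, hπ₃, (sat_chiF F v a0 π₃).mp hc⟩
        obtain ⟨π', hπ's, hπ'⟩ := key _ hnb
        have hbox : F'.sat (SForm.box s (SForm.neg (chiF v a0))) π' := not_not.mp hπ'
        have := hbox.1 (sig_sub_star F' s hπ's) π'₀ hπ'₀s
        exact this ((sat_chiF F' v a0 π'₀).mpr rfl)
    · -- A empty: all valuations are equal, both images nonempty
      have hsub : ∀ v w : Set A, v = w := by
        intro v w; ext p; exact absurd ⟨p⟩ hA
      obtain ⟨π, hπ⟩ := F.sig_nonempty s
      obtain ⟨π', hπ'⟩ := F'.sig_nonempty s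
      ext v
      constructor
      · rintro ⟨x, hx, rfl⟩; exact ⟨π', hπ', hsub _ _⟩
      · rintro ⟨x, hx, rfl⟩; exact ⟨π, hπ, hsub _ _⟩
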